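/- Elliptic Cauchy determinant: let [·]: ℂ → ℂ be an odd function satisfying the Riemann relation. For variables z = (z₁,…,z_N) and w = (w₁,…,w_N) with all [z_i ± w_j] nonzero, the determinant D(z|w) = det( 1/[z_i ± w_j] )_{i,j=1}^N equals (-1)^{N(N-1)/2} · (∏_{1≤i<j≤N} [z_i ± z_j][w_i ± w_j]) / (∏_{1≤i,j≤N} [z_i ± w_j]). -/

import Mathlib

open Finset

lemma Ioi_eq_filter' {n : ℕ} (a : Fin n) : Ioi a = univ.filter (a < ·) := by
  ext x; simp

lemma prod_Ioi_succ {M : Type*} [CommMonoid M] (n : ℕ) (h : Fin (n+1) → Fin (n+1) → M) :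
    ∏ i, ∏ j ∈ Ioi i, h i j =
      (∏ i : Fin n, ∏ j ∈ Ioi i, h i.castSucc j.castSucc) *
        ∏ i : Fin n, h i.castSucc (Fin.last n) := by
  have hnl : ∀ i : Fin n, ¬ (Fin.last n < i.castSucc) := fun i =>
    not_lt.2 (le_of_lt (Fin.castSucc_lt_last i))
  simp only [Ioi_eq_filter', prod_filter]
  rw [Fin.prod_univ_castSucc]
  simp only [Fin.prod_univ_castSucc (n := n)]
  simp only [Fin.castSucc_lt_castSucc_iff, Fin.castSucc_lt_last, if_true, hnl, if_false]
  rw [if_neg (lt_irrefl _)]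
  simp [prod_mul_distrib]

lemma cauchy_aux (g : ℂ → ℂ → ℂ)
    (hsym : ∀ a b : ℂ, g b a = -g a b)
    (hRg : ∀ x y u v : ℂ, g x u * g y v - g x v * g y u = g x y * g u v) :
    ∀ (N : ℕ) (z w : Fin N → ℂ), (∀ i j, g (z i) (w j) ≠ 0) →
      Matrix.det (Matrix.of fun i j : Fin N => (g (z i) (w j))⁻¹) =
        (-1 : ℂ) ^ (N * (N - 1) / 2) *
          ((∏ i, ∏ j ∈ Ioi i, g (z i) (z j) * g (w i) (w j)) /
            ∏ i, ∏ j, g (z i) (w j)) := by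
  intro N
  induction N with
  | zero =>
      intro z w _
      simp [Matrix.det_fin_zero]
  | succ n ih =>
      intro z w hnz
      set L : Fin (n+1) := Fin.last n with hL
      -- abbreviations
      set A : Matrix (Fin (n+1)) (Fin (n+1)) ℂ :=
        Matrix.of (fun i j => (g (z i) (w j))⁻¹) with hA
      set c : Fin (n+1) → ℂ :=
        fun i => if i = L then 0 else -(g (z L) (w L) * (g (z i) (w L))⁻¹) with hc
      set B : Matrix (Fin (n+1)) (Fin (n+1)) ℂ :=
        Matrix.of (fun i j => A i j + c i * A L j) with hB
      have hcL : c L = 0 := by simp [hc]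
      have hdetBA : B.det = A.det :=
        Matrix.det_eq_of_forall_row_eq_smul_add_const c L hcL (fun i j => rfl)
      -- block structure
      set r : Fin n → ℂ :=
        fun i => g (z i.castSucc) (z L) * (g (z i.castSucc) (w L))⁻¹ with hr
      set s : Fin n → ℂ :=
        fun j => g (w L) (w j.castSucc) * (g (z L) (w j.castSucc))⁻¹ with hs
      set A' : Matrix (Fin n) (Fin n) ℂ :=
        Matrix.of (fun i j => (g (z i.castSucc) (w j.castSucc))⁻¹) with hA'
      set B11 : Matrix (Fin n) (Fin n) ℂ :=
        Matrix.of (fun i j => r i * (s j * A' i j)) with hB11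
      set B21 : Matrix (Fin 1) (Fin n) ℂ :=
        Matrix.of (fun _ j => A L j.castSucc) with hB21
      set B22 : Matrix (Fin 1) (Fin 1) ℂ :=
        Matrix.of (fun _ _ => (g (z L) (w L))⁻¹) with hB22
      have hinr : ∀ x : Fin 1, (finSumFinEquiv (Sum.inr x) : Fin (n+1)) = L := by
        intro x
        apply Fin.ext
        simp [hL, Fin.last]
      have hinl : ∀ i : Fin n, (finSumFinEquiv (Sum.inl i) : Fin (n+1)) = i.castSucc := by
        intro i
        apply Fin.ext
        simp
      have hne : ∀ i : Fin n, i.castSucc ≠ L := fun i => Fin.ne_of_lt (Fin.castSucc_lt_last i)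
      -- entry identity
      have key : ∀ (i j : Fin n), B i.castSucc j.castSucc = B11 i j := by
        intro i j
        have hRij := hRg (z i.castSucc) (z L) (w L) (w j.castSucc)
        have h1 := hnz i.castSucc j.castSucc
        have h2 := hnz i.castSucc L
        have h3 := hnz L j.castSucc
        have h4 := hnz L L
        simp only [hB, hB11, hA, hA', hc, hr, hs, Matrix.of_apply, if_neg (hne i)]
        field_simp
        linear_combination hRij
      have hBlock : B.submatrix finSumFinEquiv finSumFinEquiv =
          Matrix.fromBlocks B11 0 B21 B22 := by
        ext i j
        cases i with
        | inl i =>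
          cases j with
          | inl j =>
            rw [Matrix.submatrix_apply, hinl, hinl, Matrix.fromBlocks_apply₁₁]
            exact key i j
          | inr j =>
            rw [Matrix.submatrix_apply, hinl, hinr, Matrix.fromBlocks_apply₁₂]
            have h2 := hnz i.castSucc L
            have h4 := hnz L L
            simp only [hB, hA, hc, Matrix.of_apply, if_neg (hne i), Matrix.zero_apply]
            field_simp
            ring
        | inr i =>
          cases j with
          | inl j =>
            rw [Matrix.submatrix_apply, hinr, hinl, Matrix.fromBlocks_apply₂₁]
            simp [hB, hB21, hcL]
          | inr j =>
            rw [Matrix.submatrix_apply, hinr, hinr, Matrix.fromBlocks_apply₂₂]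
            simp [hB, hB22, hcL, hA]
      have hdetB : B.det = B11.det * (g (z L) (w L))⁻¹ := by
        rw [← Matrix.det_submatrix_equiv_self finSumFinEquiv, hBlock,
          Matrix.det_fromBlocks_zero₁₂]
        congr 1
        rw [Matrix.det_fin_one]
        rfl
      have hdetB11 : B11.det = (∏ i, r i) * ((∏ j, s j) * A'.det) := by
        rw [show B11 = Matrix.of (fun i j => r i * ((Matrix.of fun i j => s j * A' i j)) i j) from rfl,
          Matrix.det_mul_column, Matrix.det_mul_row]
      have hdetA' : A'.det =
          (-1 : ℂ) ^ (n * (n - 1) / 2) *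
            ((∏ i : Fin n, ∏ j ∈ Ioi i,
                g (z i.castSucc) (z j.castSucc) * g (w i.castSucc) (w j.castSucc)) /
              ∏ i : Fin n, ∏ j : Fin n, g (z i.castSucc) (w j.castSucc)) := by
        exact ih (fun i => z i.castSucc) (fun j => w j.castSucc) (fun i j => hnz _ _)
      have hPr : ∏ i, r i =
          (∏ i : Fin n, g (z i.castSucc) (z L)) * (∏ i : Fin n, g (z i.castSucc) (w L))⁻¹ := by
        simp only [hr]
        rw [prod_mul_distrib, prod_inv_distrib]
      have hPs : ∏ j, s j =
          (-1 : ℂ) ^ n * ((∏ j : Fin n, g (w j.castSucc) (w L)) *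
            (∏ j : Fin n, g (z L) (w j.castSucc))⁻¹) := by
        have hsj : ∀ j : Fin n, s j = -1 * (g (w j.castSucc) (w L) * (g (z L) (w j.castSucc))⁻¹) := by
          intro j
          simp only [hs]
          rw [hsym (w j.castSucc) (w L)]
          ring
        rw [prod_congr rfl (fun j _ => hsj j), prod_mul_distrib, prod_const, card_univ,
          Fintype.card_fin, prod_mul_distrib, prod_inv_distrib]
      have hQ' : (∏ i : Fin n, ∏ j : Fin n, g (z i.castSucc) (w j.castSucc)) ≠ 0 :=
        prod_ne_zero_iff.mpr fun i _ => prod_ne_zero_iff.mpr fun j _ => hnz _ _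
      have hb : (∏ i : Fin n, g (z i.castSucc) (w L)) ≠ 0 :=
        prod_ne_zero_iff.mpr fun i _ => hnz _ _
      have he : (∏ j : Fin n, g (z L) (w j.castSucc)) ≠ 0 :=
        prod_ne_zero_iff.mpr fun j _ => hnz _ _
      have h4 : g (z L) (w L) ≠ 0 := hnz L L
      rw [← hdetBA, hdetB, hdetB11, hdetA', hPr, hPs, Nat.triangle_succ,
        prod_Ioi_succ n (fun i j => g (z i) (z j) * g (w i) (w j))]
      rw [show (∏ i : Fin (n+1), ∏ j : Fin (n+1), g (z i) (w j)) =
        ((∏ i : Fin n, ((∏ j : Fin n, g (z i.castSucc) (w j.castSucc)) * g (z i.castSucc) (w L))) *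
          ((∏ j : Fin n, g (z L) (w j.castSucc)) * g (z L) (w L))) from by
          simp only [Fin.prod_univ_castSucc, hL]]
      rw [prod_mul_distrib, prod_mul_distrib]
      rw [pow_add]
      field_simp
      ring

/-- The elliptic Cauchy determinant (Frobenius-type) for an odd function
satisfying the Riemann relation. -/
theorem elliptic_cauchy_determinant (f : ℂ → ℂ)
    (hodd : ∀ u : ℂ, f (-u) = -f u)
    (hR : ∀ x y u v : ℂ,
      f (x + u) * f (x - u) * (f (y + v) * f (y - v)) -
        f (x + v) * f (x - v) * (f (y + u) * f (y - u)) =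
      f (x + y) * f (x - y) * (f (u + v) * f (u - v)))
    (N : ℕ) (z w : Fin N → ℂ)
    (hzw : ∀ i j : Fin N, f (z i + w j) * f (z i - w j) ≠ 0) :
    Matrix.det (Matrix.of fun i j : Fin N => (f (z i + w j) * f (z i - w j))⁻¹) =
      (-1 : ℂ) ^ (N * (N - 1) / 2) *
        ((∏ i, ∏ j ∈ Ioi i, f (z i + z j) * f (z i - z j) *
            (f (w i + w j) * f (w i - w j))) /
          ∏ i, ∏ j, f (z i + w j) * f (z i - w j)) := by
  have hsym : ∀ a b : ℂ, f (b + a) * f (b - a) = -(f (a + b) * f (a - b)) := by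
    intro a b
    rw [show b + a = a + b from add_comm b a, show b - a = -(a - b) by ring, hodd]
    ring
  exact cauchy_aux (fun a b => f (a + b) * f (a - b)) hsym hR N z w hzw
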